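/- Let U be a group, A an abelian group, and {W_a : a ∈ A} a family of subgroups of U each containing the commutator subgroup [U,U]. Suppose that W_a ⊆ W_b · W_{2b-a} for all a, b ∈ A. If A is generated by elements a_1, ..., a_m, then the product of all W_a over a ∈ A equals the product of the W_{ε_1 a_1 + ... + ε_m a_m} over all tuples (ε_1, ..., ε_m) ∈ {0,1}^m. -/

import Mathlib

open Pointwise

/-- Lemma 4.5 of Hazrat–Wadsworth: if `U` is a group, `A` an abelian group and
`W a` a family of subgroups of `U` each containing the commutator subgroup, with
`W a ⊆ W b · W (2b - a)` for all `a b`, and `A` is generated by `a 0, ..., a (m-1)`,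
then the product (= join) of all the `W a` equals the product of the
`W (ε₁ a₁ + ⋯ + εₘ aₘ)` over `ε ∈ {0,1}^m`. -/
theorem stmt0 {U A : Type*} [Group U] [AddCommGroup A]
    (W : A → Subgroup U)
    (hcomm : ∀ x : A, ⁅(⊤ : Subgroup U), (⊤ : Subgroup U)⁆ ≤ W x)
    (hW : ∀ x y : A, (W x : Set U) ⊆ (W y : Set U) * (W (y + y - x) : Set U))
    (m : ℕ) (a : Fin m → A)
    (hgen : AddSubgroup.closure (Set.range a) = ⊤) :
    (⨆ x : A, W x) = ⨆ ε : Fin m → Bool, W (∑ i, if ε i then a i else 0) := by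
  set R : Subgroup U := ⨆ ε : Fin m → Bool, W (∑ i, if ε i then a i else 0) with hR
  set P : A → Prop := fun x => W x ≤ R with hP
  -- closure property
  have hrefl : ∀ y z : A, P y → P z → P (y + y - z) := by
    intro y z hy hz u hu
    have := hW (y + y - z) y hu
    have hz' : y + y - (y + y - z) = z := by abel
    rw [hz'] at this
    obtain ⟨g, hg, h, hh, rfl⟩ := this
    exact R.mul_mem (hy hg) (hz hh)
  -- arithmetic progression lemma
  have hprog : ∀ x d : A, P x → P (x + d) → ∀ n : ℤ, P (x + n • d) := by
    intro x d hx hxd n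
    have up : ∀ k : ℕ, P (x + (k : ℤ) • d) ∧ P (x + ((k : ℤ) + 1) • d) := by
      intro k
      induction k with
      | zero => exact ⟨by simpa using hx, by simpa using hxd⟩
      | succ k ih =>
        refine ⟨by simpa using ih.2, ?_⟩
        have := hrefl _ _ ih.2 ih.1
        have he : x + ((k : ℤ) + 1) • d + (x + ((k : ℤ) + 1) • d) - (x + (k : ℤ) • d)
            = x + (((k : ℕ) + 1 : ℤ) + 1) • d := by
          push_cast
          rw [add_smul, add_smul, add_smul]
          simp only [one_smul]
          abel
        rwa [he] at this
    have down : ∀ k : ℕ, P (x - (k : ℤ) • d) ∧ P (x - ((k : ℤ) + 1) • d) := by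
      intro k
      induction k with
      | zero =>
        refine ⟨by simpa using hx, ?_⟩
        have := hrefl _ _ hx hxd
        have he : x + x - (x + d) = x - ((0 : ℤ) + 1) • d := by
          simp only [zero_add, one_smul]; abel
        rwa [he] at this
      | succ k ih =>
        refine ⟨by simpa using ih.2, ?_⟩
        have := hrefl _ _ ih.2 ih.1
        have he : x - ((k : ℤ) + 1) • d + (x - ((k : ℤ) + 1) • d) - (x - (k : ℤ) • d)
            = x - (((k : ℕ) + 1 : ℤ) + 1) • d := by
          push_cast
          rw [add_smul, add_smul, add_smul]
          simp only [one_smul]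
          abel
        rwa [he] at this
    rcases n with p | p
    · simpa using (up p).1
    · have := (down (p + 1)).1
      push_cast at this
      have he : x - ((p : ℤ) + 1) • d = x + (Int.negSucc p) • d := by
        rw [Int.negSucc_eq, neg_smul, sub_eq_add_neg]
      rwa [he] at this
  -- base case: subset sums
  have hbase : ∀ ε : Fin m → Bool, P (∑ i, if ε i then a i else 0) := by
    intro ε
    exact le_iSup (fun ε : Fin m → Bool => W (∑ i, if ε i then a i else 0)) ε
  -- main induction
  have hmain : ∀ k : ℕ, ∀ n : Fin m → ℤ, (∀ i : Fin m, k ≤ (i : ℕ) → n i = 0 ∨ n i = 1) →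
      P (∑ i, n i • a i) := by
    intro k
    induction k with
    | zero =>
      intro n hn
      have he : (∑ i, n i • a i) = ∑ i, if (fun i => decide (n i = 1)) i = true then a i else 0 := by
        refine Finset.sum_congr rfl fun i _ => ?_
        rcases hn i (Nat.zero_le _) with h | h <;> simp [h]
      rw [he]
      exact hbase fun i => decide (n i = 1)
    | succ k ih =>
      intro n hn
      by_cases hk : k < m
      · set i0 : Fin m := ⟨k, hk⟩ with hi0
        set n0 : Fin m → ℤ := Function.update n i0 0 with hn0
        set n1 : Fin m → ℤ := Function.update n i0 1 with hn1
        have hcon : ∀ (c : ℤ) (i : Fin m), k ≤ (i : ℕ) → (c = 0 ∨ c = 1) →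
            Function.update n i0 c i = 0 ∨ Function.update n i0 c i = 1 := by
          intro c i hi hc
          rcases eq_or_ne i i0 with rfl | hne
          · simpa using hc
          · rw [Function.update_of_ne hne]
            refine hn i ?_
            rcases lt_or_eq_of_le hi with h | h
            · omega
            · exact absurd (Fin.ext h.symm : i = i0) hne
        have h0 : P (∑ i, n0 i • a i) := ih n0 fun i hi => hcon 0 i hi (Or.inl rfl)
        have h1 : P (∑ i, n1 i • a i) := ih n1 fun i hi => hcon 1 i hi (Or.inr rfl)
        have hsum : ∀ c : ℤ, ∑ i, Function.update n i0 c i • a i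
            = (∑ i ∈ Finset.univ.erase i0, n i • a i) + c • a i0 := by
          intro c
          rw [← Finset.add_sum_erase _ _ (Finset.mem_univ i0), Function.update_self, add_comm]
          congr 1
          refine Finset.sum_congr rfl fun i hi => ?_
          rw [Function.update_of_ne (Finset.ne_of_mem_erase hi)]
        have h1' : P ((∑ i ∈ Finset.univ.erase i0, n i • a i) + a i0) := by
          have := h1; rw [hn1, hsum 1, one_smul] at this; exact this
        have h0' : P (∑ i ∈ Finset.univ.erase i0, n i • a i) := by
          have := h0; rw [hn0, hsum 0, zero_smul, add_zero] at this; exact this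
        have hd := hprog _ (a i0) h0' h1' (n i0)
        have : (∑ i, n i • a i) = (∑ i ∈ Finset.univ.erase i0, n i • a i) + n i0 • a i0 := by
          rw [← Finset.add_sum_erase _ _ (Finset.mem_univ i0), add_comm]
        rw [this]
        exact hd
      · exact ih n fun i hi => absurd i.isLt (by omega)
  -- every element of A is an integer combination
  have hall : ∀ x : A, P x := by
    intro x
    have hx : x ∈ Submodule.span ℤ (Set.range a) := by
      have : x ∈ (Submodule.span ℤ (Set.range a)).toAddSubgroup := by
        rw [Submodule.span_int_eq_addSubgroupClosure, hgen]; trivial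
      exact this
    obtain ⟨c, hc⟩ := (Submodule.mem_span_range_iff_exists_fun ℤ).mp hx
    have := hmain m c fun i hi => absurd i.isLt (by omega)
    rwa [hc] at this
  apply le_antisymm
  · exact iSup_le fun x => hall x
  · exact iSup_le fun ε => le_iSup W _
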